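/- Let u, v : ℝⁿ → (-∞,∞] be proper lower semicontinuous convex functions such that the pointwise minimum u ∧ v is convex. Then (u ∧ v)* = u* ∨ v* and (u ∨ v)* = u* ∧ v*, where ∨ denotes pointwise maximum. -/

import Mathlib

open scoped RealInnerProductSpace Pointwise Classical

/-- The Legendre transform (convex conjugate) of an extended-real-valued function. -/
noncomputable def legendre {n : ℕ} (u : EuclideanSpace ℝ (Fin n) → EReal)
    (x : EuclideanSpace ℝ (Fin n)) : EReal :=
  ⨆ y, ((⟪x, y⟫ : ℝ) : EReal) - u y

/-- Convexity for extended-real-valued functions. -/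
def ConvexE {n : ℕ} (u : EuclideanSpace ℝ (Fin n) → EReal) : Prop :=
  ∀ x y : EuclideanSpace ℝ (Fin n), ∀ a b : ℝ, 0 ≤ a → 0 ≤ b → a + b = 1 →
    u (a • x + b • y) ≤ (a : EReal) * u x + (b : EReal) * u y

/-- Properness: never `⊥` and not identically `⊤`. -/
def ProperE {n : ℕ} (u : EuclideanSpace ℝ (Fin n) → EReal) : Prop :=
  (∀ x, u x ≠ ⊥) ∧ (∃ x, u x ≠ ⊤)

/-- Subdifferential of an extended-real-valued function. -/
def subdiff {n : ℕ} (v : EuclideanSpace ℝ (Fin n) → EReal)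
    (x : EuclideanSpace ℝ (Fin n)) : Set (EuclideanSpace ℝ (Fin n)) :=
  {y | ∀ z, v x + ((⟪y, z - x⟫ : ℝ) : EReal) ≤ v z}

/-- Infimal convolution. -/
noncomputable def infConv {n : ℕ} (u v : EuclideanSpace ℝ (Fin n) → EReal)
    (x : EuclideanSpace ℝ (Fin n)) : EReal :=
  ⨅ y, u y + v (x - y)

/-- The unit cube `[-1,1]ⁿ`. -/
def cube (n : ℕ) : Set (EuclideanSpace ℝ (Fin n)) := {x | ∀ i, |x i| ≤ 1}

/-- The constrained Moreau envelope `u □ ((λ/2)‖·‖² + I_{μC})`. -/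
noncomputable def env {n : ℕ} (u : EuclideanSpace ℝ (Fin n) → EReal) (l μ : ℝ)
    (x : EuclideanSpace ℝ (Fin n)) : EReal :=
  ⨅ y ∈ {y | u y ≠ ⊤ ∧ x - y ∈ μ • cube n},
    u y + (((l / 2) * ‖x - y‖ ^ 2 : ℝ) : EReal)


private lemma er_aux1 (a t : ℝ) (b : EReal) (h : (a : EReal) - b < (t : EReal)) :
    ((a - t : ℝ) : EReal) < b := by
  induction b using EReal.rec with
  | bot => simp at h
  | coe r => norm_cast at h ⊢; linarith
  | top => exact EReal.coe_lt_top _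

private lemma er_aux2 (a t : ℝ) (b : EReal) (h : (t : EReal) < (a : EReal) - b) :
    b < ((a - t : ℝ) : EReal) := by
  induction b using EReal.rec with
  | bot => exact EReal.bot_lt_coe _
  | coe r => norm_cast at h ⊢; linarith
  | top => simp at h

private lemma er_real_of (b : EReal) (hb : b ≠ ⊥) (c : ℝ) (h : b < (c : EReal)) :
    ∃ r : ℝ, b = (r : EReal) ∧ r < c := by
  induction b using EReal.rec with
  | bot => exact absurd rfl hb
  | coe r => exact ⟨r, rfl, by exact_mod_cast h⟩
  | top => exact absurd h (by simp)

lemma legendre_max_ge {n : ℕ} (u v : EuclideanSpace ℝ (Fin n) → EReal)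
    (hub : ∀ z, u z ≠ ⊥) (hvb : ∀ z, v z ≠ ⊥)
    (hul : LowerSemicontinuous u) (hvl : LowerSemicontinuous v)
    (hmin : ConvexE (fun z => min (u z) (v z))) (x : EuclideanSpace ℝ (Fin n)) :
    min (legendre u x) (legendre v x) ≤ legendre (fun y => max (u y) (v y)) x := by
  by_contra hcon
  push_neg at hcon
  obtain ⟨t, ht1, ht2⟩ := EReal.exists_between_coe_real hcon
  have htu : (t : EReal) < legendre u x := ht2.trans_le (min_le_left _ _)
  have htv : (t : EReal) < legendre v x := ht2.trans_le (min_le_right _ _)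
  simp only [legendre, lt_iSup_iff] at htu htv
  obtain ⟨y₁, hy₁⟩ := htu
  obtain ⟨y₂, hy₂⟩ := htv
  have hu1 : u y₁ < ((⟪x, y₁⟫ - t : ℝ) : EReal) := er_aux2 _ _ _ hy₁
  have hv2 : v y₂ < ((⟪x, y₂⟫ - t : ℝ) : EReal) := er_aux2 _ _ _ hy₂
  set y : ℝ → EuclideanSpace ℝ (Fin n) := fun s => (1 - s) • y₁ + s • y₂ with hy
  set L : ℝ → ℝ := fun s => (1 - s) * ⟪x, y₁⟫ + s * ⟪x, y₂⟫ - t with hL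
  have hycont : Continuous y := by fun_prop
  have hLcont : Continuous L := by fun_prop
  have hLy : ∀ s, (⟪x, y s⟫ : ℝ) - t = L s := by
    intro s
    simp only [hy, hL, inner_add_right, real_inner_smul_right]
  have hall : ∀ s, ((L s : ℝ) : EReal) < max (u (y s)) (v (y s)) := by
    intro s
    have h1 : ((⟪x, y s⟫ : ℝ) : EReal) - max (u (y s)) (v (y s)) < (t : EReal) :=
      lt_of_le_of_lt
        (le_iSup (fun z => ((⟪x, z⟫ : ℝ) : EReal) - max (u z) (v z)) (y s)) ht1
    have := er_aux1 _ _ _ h1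
    rwa [hLy s] at this
  have hy0 : y 0 = y₁ := by simp [hy]
  have hy1 : y 1 = y₂ := by simp [hy]
  have hL0 : L 0 = ⟪x, y₁⟫ - t := by simp [hL]
  have hL1 : L 1 = ⟪x, y₂⟫ - t := by simp [hL]
  -- min along the segment is below L
  obtain ⟨r₁, hr₁, hr₁lt⟩ := er_real_of (min (u y₁) (v y₁))
    (by simp [hub y₁, hvb y₁]) (⟪x, y₁⟫ - t)
    (lt_of_le_of_lt (min_le_left _ _) hu1)
  obtain ⟨r₂, hr₂, hr₂lt⟩ := er_real_of (min (u y₂) (v y₂))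
    (by simp [hub y₂, hvb y₂]) (⟪x, y₂⟫ - t)
    (lt_of_le_of_lt (min_le_right _ _) hv2)
  have hmlt : ∀ s ∈ Set.Icc (0:ℝ) 1, min (u (y s)) (v (y s)) < ((L s : ℝ) : EReal) := by
    intro s hs
    have h1 := hmin y₁ y₂ (1 - s) s (by linarith [hs.2]) hs.1 (by ring)
    simp only [hr₁, hr₂] at h1
    have h2 : ((1 - s : ℝ) : EReal) * (r₁ : EReal) + (s : EReal) * (r₂ : EReal)
        = (((1 - s) * r₁ + s * r₂ : ℝ) : EReal) := by norm_cast
    rw [h2] at h1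
    refine h1.trans_lt ?_
    rw [EReal.coe_lt_coe_iff]
    have hLs : L s = (1 - s) * (⟪x, y₁⟫ - t) + s * (⟪x, y₂⟫ - t) := by
      simp only [hL]; ring
    rw [hLs]
    rcases eq_or_lt_of_le hs.1 with h0 | h0
    · rw [← h0]; simpa using hr₁lt
    · have := mul_le_mul_of_nonneg_left hr₁lt.le (by linarith [hs.2] : (0:ℝ) ≤ 1 - s)
      have := mul_lt_mul_of_pos_left hr₂lt h0
      linarith
  -- the set A
  set A : Set ℝ := {s | s ∈ Set.Icc (0:ℝ) 1 ∧ u (y s) < ((L s : ℝ) : EReal)} with hA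
  have h0A : (0 : ℝ) ∈ A := by
    refine ⟨⟨le_refl _, zero_le_one⟩, ?_⟩
    rw [hy0, hL0]; exact hu1
  have hAne : A.Nonempty := ⟨0, h0A⟩
  have hAbdd : BddAbove A := ⟨1, fun s hs => hs.1.2⟩
  set S : ℝ := sSup A with hS
  have hS0 : 0 ≤ S := le_csSup hAbdd h0A
  have hS1 : S ≤ 1 := csSup_le hAne (fun s hs => hs.1.2)
  by_cases hcase : u (y S) < ((L S : ℝ) : EReal)
  · -- v (y S) > L S, approach from the right
    have hvgt : ((L S : ℝ) : EReal) < v (y S) :=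
      (lt_max_iff.mp (hall S)).resolve_left (lt_asymm hcase)
    have hSlt1 : S < 1 := by
      rcases lt_or_eq_of_le hS1 with h | h
      · exact h
      · exfalso
        rw [h, hy1, hL1] at hvgt
        exact absurd hv2 (not_lt.mpr hvgt.le)
    obtain ⟨c, hc1, hc2⟩ := EReal.exists_between_coe_real hvgt
    have hclt : L S < c := by exact_mod_cast hc1
    have h1 : ∀ᶠ s in nhds S, (c : EReal) < v (y s) :=
      (hycont.tendsto S).eventually (hvl (y S) c hc2)
    have h2 : ∀ᶠ s in nhds S, L s < c := (hLcont.tendsto S).eventually (gt_mem_nhds hclt)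
    obtain ⟨δ, hδ, hδP⟩ := Metric.eventually_nhds_iff.mp (h1.and h2)
    set s : ℝ := min (S + δ / 2) ((S + 1) / 2) with hs
    have hsgt : S < s := lt_min (by linarith) (by linarith)
    have hsle1 : s ≤ 1 := (min_le_right _ _).trans (by linarith)
    have hdist : dist s S < δ := by
      rw [Real.dist_eq, abs_of_nonneg (by linarith : (0:ℝ) ≤ s - S)]
      have : s ≤ S + δ / 2 := min_le_left _ _
      linarith
    have hsIcc : s ∈ Set.Icc (0:ℝ) 1 := ⟨by linarith, hsle1⟩
    have hsnA : s ∉ A := fun hsA => absurd (le_csSup hAbdd hsA) (not_le.mpr hsgt)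
    have hnu : ¬ u (y s) < ((L s : ℝ) : EReal) := fun h => hsnA ⟨hsIcc, h⟩
    have hv : v (y s) < ((L s : ℝ) : EReal) :=
      (min_lt_iff.mp (hmlt s hsIcc)).resolve_left hnu
    obtain ⟨hc', hL'⟩ := hδP hdist
    have : (c : EReal) < (c : EReal) :=
      hc'.trans (hv.trans (by exact_mod_cast hL'))
    exact lt_irrefl _ this
  · -- u (y S) > L S, approach from the left
    have hvlt : v (y S) < ((L S : ℝ) : EReal) :=
      (min_lt_iff.mp (hmlt S ⟨hS0, hS1⟩)).resolve_left hcase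
    have hugt : ((L S : ℝ) : EReal) < u (y S) :=
      (lt_max_iff.mp (hall S)).resolve_right (lt_asymm hvlt)
    obtain ⟨c, hc1, hc2⟩ := EReal.exists_between_coe_real hugt
    have hclt : L S < c := by exact_mod_cast hc1
    have h1 : ∀ᶠ s in nhds S, (c : EReal) < u (y s) :=
      (hycont.tendsto S).eventually (hul (y S) c hc2)
    have h2 : ∀ᶠ s in nhds S, L s < c := (hLcont.tendsto S).eventually (gt_mem_nhds hclt)
    obtain ⟨δ, hδ, hδP⟩ := Metric.eventually_nhds_iff.mp (h1.and h2)
    obtain ⟨s, hsA, hslt⟩ := exists_lt_of_lt_csSup hAne (by linarith : S - δ < sSup A)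
    have hsle : s ≤ S := le_csSup hAbdd hsA
    have hdist : dist s S < δ := by
      rw [Real.dist_eq, abs_of_nonpos (by linarith : s - S ≤ 0)]
      linarith
    obtain ⟨hc', hL'⟩ := hδP hdist
    have : (c : EReal) < (c : EReal) :=
      hc'.trans (hsA.2.trans (by exact_mod_cast hL'))
    exact lt_irrefl _ this

theorem legendre_min_max {n : ℕ} (u v : EuclideanSpace ℝ (Fin n) → EReal)
    (hup : ProperE u) (hul : LowerSemicontinuous u) (huc : ConvexE u)
    (hvp : ProperE v) (hvl : LowerSemicontinuous v) (hvc : ConvexE v)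
    (hmin : ConvexE (fun x => min (u x) (v x))) :
    (∀ x : EuclideanSpace ℝ (Fin n),
      legendre (fun y => min (u y) (v y)) x = max (legendre u x) (legendre v x)) ∧
    (∀ x : EuclideanSpace ℝ (Fin n),
      legendre (fun y => max (u y) (v y)) x = min (legendre u x) (legendre v x)) := by
  constructor
  · intro x
    have key : ∀ y : EuclideanSpace ℝ (Fin n),
        ((⟪x, y⟫ : ℝ) : EReal) - min (u y) (v y)
          = max (((⟪x, y⟫ : ℝ) : EReal) - u y) (((⟪x, y⟫ : ℝ) : EReal) - v y) := by
      intro y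
      rcases min_cases (u y) (v y) with ⟨h1, h2⟩ | ⟨h1, h2⟩ <;> rw [h1]
      · exact (max_eq_left (EReal.sub_le_sub le_rfl h2)).symm
      · exact (max_eq_right (EReal.sub_le_sub le_rfl h2.le)).symm
    simp only [legendre, key, iSup_sup_eq]
  · intro x
    refine le_antisymm ?_ (legendre_max_ge u v hup.1 hvp.1 hul hvl hmin x)
    refine le_min ?_ ?_
    · exact iSup_mono fun y => EReal.sub_le_sub le_rfl (le_max_left _ _)
    · exact iSup_mono fun y => EReal.sub_le_sub le_rfl (le_max_right _ _)
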